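/- arXiv:1102.1093 — 6 statements merged into one kernel-verified Lean document; each statement's English description precedes it below -/
import Mathlib

section
/- Let C be a rational plane curve of degree d with a point of multiplicity m, and let (a,b) with a ≤ b be its splitting type. Then min(m, d−m) ≤ a ≤ min(d−m, ⌊d/2⌋). In particular, if d ≤ 2m then (a,b) = (d−m, m), and if d = 2m+1 then (a,b) = (m, m+1). -/
set_option synthInstance.maxHeartbeats 1000000
set_option maxHeartbeats 1000000


/- A rational plane curve is given parametrically by three homogeneous forms
φ_0, φ_1, φ_2 ∈ K[s,t]_d.  By Grothendieck splitting, φ*Ω_{P²}(1) ≅ O(−a)⊕O(−b);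
pulling back the Euler sequence identifies the graded module ⊕_k H⁰(φ*Ω(1)(k+d))
with the module of syzygies of (φ_0,φ_1,φ_2).  Thus "(a,b) is the splitting type"
is faithfully encoded by: for every k, the space of degree-k syzygies has
dimension max(0,k+1−a) + max(0,k+1−b), which says precisely that the syzygy
module is S(−a) ⊕ S(−b). -/

noncomputable section

open MvPolynomial

variable (K : Type) [Field K]

/-- The linear map `(α₀,α₁,α₂) ↦ α₀φ₀ + α₁φ₁ + α₂φ₂`. -/
def sigmaMap (φ : Fin 3 → MvPolynomial (Fin 2) K) :
    (Fin 3 → MvPolynomial (Fin 2) K) →ₗ[K] MvPolynomial (Fin 2) K :=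
  ∑ i : Fin 3, (LinearMap.mulRight K (φ i)).comp (LinearMap.proj i)

/-- The space of syzygies of `φ` in degree `k`: triples of homogeneous forms of
degree `k` with `α₀φ₀ + α₁φ₁ + α₂φ₂ = 0`. -/
def syz (φ : Fin 3 → MvPolynomial (Fin 2) K) (k : ℕ) :
    Submodule K (Fin 3 → MvPolynomial (Fin 2) K) :=
  (⨅ i : Fin 3, (homogeneousSubmodule (Fin 2) K k).comap (LinearMap.proj i)) ⊓
    LinearMap.ker (sigmaMap K φ)

/-- `(a,b)` is the splitting type of the curve parameterized by `φ`, i.e.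
`φ*Ω_{P²}(1) ≅ O(−a) ⊕ O(−b)`: the graded syzygy module of `φ` is
`S(−a) ⊕ S(−b)`, recorded dimensionwise. -/
def IsSplittingType (φ : Fin 3 → MvPolynomial (Fin 2) K) (a b : ℕ) : Prop :=
  ∀ k : ℕ, (Module.finrank K (syz K φ k) : ℤ) =
    max 0 ((k : ℤ) + 1 - a) + max 0 ((k : ℤ) + 1 - b)

/-- `φ` is a parameterization of a degree-`d` plane curve: the `φ_i` are forms of
degree `d` and the kernel of `K[x₀,x₁,x₂] → K[s,t]` is generated by an
irreducible form of degree `d` (the implicit equation; its degree being `d`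
encodes that `φ` is generically injective onto its image). -/
def ParamOfDegree (d : ℕ) (φ : Fin 3 → MvPolynomial (Fin 2) K) : Prop :=
  (∀ i, (φ i).IsHomogeneous d) ∧
  ∃ F : MvPolynomial (Fin 3) K, F.IsHomogeneous d ∧ Irreducible F ∧
    RingHom.ker (MvPolynomial.aeval φ : MvPolynomial (Fin 3) K →ₐ[K] _).toRingHom =
      Ideal.span {F}


/-- The curve parameterized by `φ` has a point `p = [1, ℓ₁, ℓ₂]` of multiplicity
`m`: after subtracting `ℓ_i φ₀` the remaining two coordinates have greatest
common factor `q` of degree exactly `m` (so `h, g` have no common factor). -/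
def HasPointOfMultiplicity (d m : ℕ) (φ : Fin 3 → MvPolynomial (Fin 2) K) : Prop :=
  ∃ (ℓ₁ ℓ₂ : K) (q h g : MvPolynomial (Fin 2) K),
    q.IsHomogeneous m ∧ h.IsHomogeneous (d - m) ∧ g.IsHomogeneous (d - m) ∧
    φ 1 = MvPolynomial.C ℓ₁ * φ 0 + q * h ∧
    φ 2 = MvPolynomial.C ℓ₂ * φ 0 + q * g ∧
    (∀ r : MvPolynomial (Fin 2) K, r ∣ h → r ∣ g → IsUnit r)

namespace AscenziAux

variable {K}

lemma degree_fin2 (d : Fin 2 →₀ ℕ) : d.degree = d 0 + d 1 := by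
  show ∑ i ∈ d.support, d i = _
  rw [Finset.sum_subset (Finset.subset_univ _), Fin.sum_univ_two]
  intro x _ hx
  exact Finsupp.notMem_support_iff.mp hx


lemma degree_eq_sum (u : Fin 2 →₀ ℕ) : (u.sum fun _ e => e) = u.degree := rfl

lemma top_ne {p : MvPolynomial (Fin 2) K} (hp : p ≠ 0) :
    homogeneousComponent p.totalDegree p ≠ 0 := by
  obtain ⟨u, hu, hdeg⟩ := p.support.exists_mem_eq_sup (support_nonempty.mpr hp)
    (fun s => s.sum fun _ e => e)
  intro h0
  have hc := coeff_homogeneousComponent (φ := p) (n := p.totalDegree) u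
  rw [h0, coeff_zero] at hc
  rw [if_pos] at hc
  · exact (mem_support_iff.mp hu) hc.symm
  · rw [← degree_eq_sum]
    exact hdeg.symm

lemma prod_top (p q : MvPolynomial (Fin 2) K) (hp : p ≠ 0) (hq : q ≠ 0) :
    homogeneousComponent (p.totalDegree + q.totalDegree) (p * q) =
      homogeneousComponent p.totalDegree p * homogeneousComponent q.totalDegree q := by
  set dp := p.totalDegree with hdp
  set dq := q.totalDegree with hdq
  set Pp := homogeneousComponent dp p with hPpdef
  set Pq := homogeneousComponent dq q with hPqdef
  have hPp : Pp.IsHomogeneous dp := homogeneousComponent_isHomogeneous dp p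
  have hPq : Pq.IsHomogeneous dq := homogeneousComponent_isHomogeneous dq q
  have hsub : ∀ (x : MvPolynomial (Fin 2) K) (n : ℕ), x ≠ 0 →
      x.totalDegree ≤ n → homogeneousComponent n x = 0 → x.totalDegree < n := by
    intro x n hx hle h0
    rcases lt_or_eq_of_le hle with h | h
    · exact h
    · exact absurd (h ▸ h0) (top_ne hx)
  have hap : p - Pp = 0 ∨ (p - Pp).totalDegree < dp := by
    rcases eq_or_ne (p - Pp) 0 with h | h
    · exact Or.inl h
    · refine Or.inr (hsub _ _ h ?_ ?_)
      · exact (totalDegree_sub p Pp).trans (max_le le_rfl hPp.totalDegree_le)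
      · rw [map_sub, homogeneousComponent_of_mem hPp, if_pos rfl, sub_self]
  have haq : q - Pq = 0 ∨ (q - Pq).totalDegree < dq := by
    rcases eq_or_ne (q - Pq) 0 with h | h
    · exact Or.inl h
    · refine Or.inr (hsub _ _ h ?_ ?_)
      · exact (totalDegree_sub q Pq).trans (max_le le_rfl hPq.totalDegree_le)
      · rw [map_sub, homogeneousComponent_of_mem hPq, if_pos rfl, sub_self]
  have hexp : p * q = Pp * Pq + (Pp * (q - Pq) + (p - Pp) * q) := by ring
  rw [hexp, map_add, map_add]
  have h1 : homogeneousComponent (dp + dq) (Pp * Pq) = Pp * Pq := by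
    rw [homogeneousComponent_of_mem (hPp.mul hPq), if_pos rfl]
  have h2 : homogeneousComponent (dp + dq) (Pp * (q - Pq)) = 0 := by
    rcases haq with h | h
    · rw [h, mul_zero, map_zero]
    · apply homogeneousComponent_eq_zero
      calc (Pp * (q - Pq)).totalDegree ≤ Pp.totalDegree + (q - Pq).totalDegree :=
            totalDegree_mul _ _
        _ < dp + dq := by
            have := hPp.totalDegree_le
            omega
  have h3 : homogeneousComponent (dp + dq) ((p - Pp) * q) = 0 := by
    rcases hap with h | h
    · rw [h, zero_mul, map_zero]
    · apply homogeneousComponent_eq_zero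
      calc ((p - Pp) * q).totalDegree ≤ (p - Pp).totalDegree + q.totalDegree :=
            totalDegree_mul _ _
        _ < dp + dq := by omega
  rw [h1, h2, h3, add_zero, add_zero]

lemma tdeg_mul {p q : MvPolynomial (Fin 2) K} (hp : p ≠ 0) (hq : q ≠ 0) :
    (p * q).totalDegree = p.totalDegree + q.totalDegree := by
  refine le_antisymm (totalDegree_mul p q) ?_
  by_contra hlt
  push_neg at hlt
  have h0 := homogeneousComponent_eq_zero _ (p*q) hlt
  rw [prod_top p q hp hq] at h0
  exact mul_ne_zero (top_ne hp) (top_ne hq) h0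

lemma isUnit_tdeg {p : MvPolynomial (Fin 2) K} (h : IsUnit p) : p.totalDegree = 0 := by
  obtain ⟨v, hv⟩ := h.exists_right_inv
  have h1 : p ≠ 0 := left_ne_zero_of_mul (hv ▸ (one_ne_zero (α := MvPolynomial (Fin 2) K)))
  have h2 : v ≠ 0 := right_ne_zero_of_mul (hv ▸ (one_ne_zero (α := MvPolynomial (Fin 2) K)))
  have := tdeg_mul h1 h2
  rw [hv, totalDegree_one] at this
  omega

lemma isUnit_of_tdeg_zero {p : MvPolynomial (Fin 2) K} (hp : p ≠ 0)
    (h : p.totalDegree = 0) : IsUnit p := by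
  have hsupp := (totalDegree_eq_zero_iff (Fin 2) p).mp h
  have hpC : p = C (coeff 0 p) := by
    apply MvPolynomial.ext
    intro u
    rcases eq_or_ne u 0 with rfl | hu
    · rw [coeff_C, if_pos rfl]
    · rw [coeff_C, if_neg (Ne.symm hu)]
      by_contra hc
      have := hsupp u (mem_support_iff.mpr hc)
      exact hu (Finsupp.ext fun i => this i)
  rw [hpC]
  refine (isUnit_iff_ne_zero.mpr ?_).map (C : K →+* MvPolynomial (Fin 2) K)
  intro h0
  rw [hpC, h0, map_zero] at hp
  exact hp rfl
  

def degSetEquiv (n : ℕ) : {d : Fin 2 →₀ ℕ | d.degree = n} ≃ Fin (n + 1) where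
  toFun d := ⟨d.1 0, by
    have h1 := degree_fin2 d.1
    have h2 := d.2
    simp only [Set.mem_setOf_eq] at h2
    omega⟩
  invFun i := ⟨Finsupp.single (0 : Fin 2) i.1 + Finsupp.single (1 : Fin 2) (n - i.1), by
    have hd := degree_fin2 (Finsupp.single (0 : Fin 2) i.1 + Finsupp.single (1 : Fin 2) (n - i.1))
    simp only [Set.mem_setOf_eq, hd, Finsupp.add_apply, Finsupp.single_apply]
    have := i.2
    norm_num
    omega⟩
  left_inv d := by
    apply Subtype.ext
    apply Finsupp.ext
    intro j
    have h1 := degree_fin2 d.1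
    have h2 := d.2
    simp only [Set.mem_setOf_eq] at h2
    fin_cases j <;>
      simp [Finsupp.single_apply] <;> omega
  right_inv i := by
    apply Fin.ext
    simp [Finsupp.single_apply]

instance degSetFintype (n : ℕ) : Fintype {d : Fin 2 →₀ ℕ | d.degree = n} :=
  Fintype.ofEquiv (Fin (n + 1)) (degSetEquiv n).symm

def homBasis (n : ℕ) : Module.Basis {d : Fin 2 →₀ ℕ | d.degree = n} K
    (homogeneousSubmodule (Fin 2) K n) :=
  (MvPolynomial.basisRestrictSupport K {d : Fin 2 →₀ ℕ | d.degree = n}).map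
    (LinearEquiv.ofEq _ _ (by rw [homogeneousSubmodule_eq_finsupp_supported]; rfl))

instance homFD (n : ℕ) : FiniteDimensional K (homogeneousSubmodule (Fin 2) K n) :=
  Module.Finite.of_basis (homBasis n)

lemma finrank_hom (n : ℕ) :
    Module.finrank K (homogeneousSubmodule (Fin 2) K n) = n + 1 := by
  rw [Module.finrank_eq_card_basis (homBasis (K := K) n),
    Fintype.card_congr (degSetEquiv n), Fintype.card_fin]

variable (K) in
def Tsub (k : ℕ) : Submodule K (Fin 3 → MvPolynomial (Fin 2) K) :=
  ⨅ i : Fin 3, (homogeneousSubmodule (Fin 2) K k).comap (LinearMap.proj i)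

lemma mem_Tsub {k : ℕ} {α : Fin 3 → MvPolynomial (Fin 2) K} :
    α ∈ Tsub K k ↔ ∀ i, (α i).IsHomogeneous k := by
  simp [Tsub, Submodule.mem_iInf]

def TsubEquiv (k : ℕ) :
    (Fin 3 → homogeneousSubmodule (Fin 2) K k) ≃ₗ[K] Tsub K k := by
  let Φ : (Fin 3 → homogeneousSubmodule (Fin 2) K k) →ₗ[K]
      (Fin 3 → MvPolynomial (Fin 2) K) :=
    LinearMap.pi fun i => (homogeneousSubmodule (Fin 2) K k).subtype.comp (LinearMap.proj i)
  have hΦ : ∀ w, Φ w = fun i => (w i : MvPolynomial (Fin 2) K) := fun w => rfl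
  have hinj : Function.Injective Φ := by
    intro x y hxy
    funext i
    exact Subtype.ext (congrFun hxy i)
  have hrange : LinearMap.range Φ = Tsub K k := by
    ext α
    rw [LinearMap.mem_range, mem_Tsub]
    constructor
    · rintro ⟨w, rfl⟩ i
      rw [hΦ]
      exact (w i).2
    · intro h
      exact ⟨fun i => ⟨α i, h i⟩, rfl⟩
  exact (LinearEquiv.ofInjective Φ hinj).trans (LinearEquiv.ofEq _ _ hrange)

instance TsubFD (k : ℕ) : FiniteDimensional K (Tsub K k) :=
  Module.Finite.equiv (TsubEquiv k)

lemma finrank_Tsub (k : ℕ) : Module.finrank K (Tsub K k) = 3 * (k + 1) := by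
  rw [← LinearEquiv.finrank_eq (TsubEquiv (K := K) k), Module.finrank_pi_fintype]
  simp [finrank_hom]


lemma sigmaMap_apply (φ α : Fin 3 → MvPolynomial (Fin 2) K) :
    sigmaMap K φ α = ∑ i : Fin 3, α i * φ i := by
  simp [sigmaMap, LinearMap.sum_apply]

lemma syz_eq (φ : Fin 3 → MvPolynomial (Fin 2) K) (k : ℕ) :
    syz K φ k = Tsub K k ⊓ LinearMap.ker (sigmaMap K φ) := rfl

instance syzFD (φ : Fin 3 → MvPolynomial (Fin 2) K) (k : ℕ) :
    FiniteDimensional K (syz K φ k) :=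
  Submodule.finiteDimensional_of_le (le_of_eq_of_le (syz_eq φ k) inf_le_left)

lemma count_le (φ ψ : Fin 3 → MvPolynomial (Fin 2) K) (r : MvPolynomial (Fin 2) K)
    (hr : r ≠ 0) (hfac : ∀ i, φ i = r * ψ i) (k : ℕ)
    (W : Submodule K (MvPolynomial (Fin 2) K)) [FiniteDimensional K W]
    (hW : ∀ α : Fin 3 → MvPolynomial (Fin 2) K, (∀ i, (α i).IsHomogeneous k) →
      sigmaMap K ψ α ∈ W) :
    3 * (k + 1) ≤ Module.finrank K (syz K φ k) + Module.finrank K W := by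
  classical
  let L : Tsub K k →ₗ[K] W :=
    LinearMap.codRestrict W ((sigmaMap K ψ).comp (Tsub K k).subtype)
      (fun x => hW x.1 (mem_Tsub.mp x.2))
  have hσ : ∀ α : Fin 3 → MvPolynomial (Fin 2) K,
      sigmaMap K φ α = r * sigmaMap K ψ α := by
    intro α
    rw [sigmaMap_apply, sigmaMap_apply, Finset.mul_sum]
    refine Finset.sum_congr rfl fun i _ => ?_
    rw [hfac i]; ring
  have hker : LinearMap.ker L = (syz K φ k).comap (Tsub K k).subtype := by
    rw [show LinearMap.ker L = LinearMap.ker ((sigmaMap K ψ).comp (Tsub K k).subtype) from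
      LinearMap.ker_codRestrict _ _ _]
    ext x
    simp only [LinearMap.mem_ker, LinearMap.comp_apply, Submodule.coe_subtype,
      Submodule.mem_comap]
    rw [syz_eq]
    simp only [Submodule.mem_inf, LinearMap.mem_ker]
    constructor
    · intro h; exact ⟨x.2, by rw [hσ, h, mul_zero]⟩
    · rintro ⟨-, h⟩
      rw [hσ] at h
      exact (mul_eq_zero.mp h).resolve_left hr
  have hker_rank : Module.finrank K (LinearMap.ker L) = Module.finrank K (syz K φ k) := by
    rw [hker]
    exact (Submodule.comapSubtypeEquivOfLe
      (le_of_eq_of_le (syz_eq φ k) inf_le_left)).finrank_eq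
  have hrn := LinearMap.finrank_range_add_finrank_ker L
  have hrange : Module.finrank K (LinearMap.range L) ≤ Module.finrank K W :=
    Submodule.finrank_le _
  rw [hker_rank] at hrn
  rw [← finrank_Tsub (K := K) k, ← hrn]
  omega

lemma no_common_factor {d a b : ℕ} (φ : Fin 3 → MvPolynomial (Fin 2) K)
    (hφd : ∀ i, (φ i).IsHomogeneous d) (hab : a ≤ b) (hsum : a + b = d)
    (hsplit : IsSplittingType K φ a b) :
    ∀ r : MvPolynomial (Fin 2) K, (∀ i, r ∣ φ i) → IsUnit r := by
  intro r hr
  by_contra hu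
  have hs := hsplit b
  rw [max_eq_right (by push_cast; omega), max_eq_right (by push_cast; omega)] at hs
  rcases eq_or_ne r 0 with rfl | hr0
  · have hφ0 : ∀ i, φ i = 0 := fun i => zero_dvd_iff.mp (hr i)
    have hcount := count_le (K := K) φ φ 1 one_ne_zero (fun i => (one_mul _).symm) b ⊥
      (fun α hα => by rw [sigmaMap_apply]; simp [hφ0])
    rw [finrank_bot] at hcount
    omega
  · have hr' : ∀ i, ∃ c, φ i = r * c := hr
    choose ψ hψ using hr'
    have he1 : 1 ≤ r.totalDegree := by
      by_contra h0
      push_neg at h0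
      exact hu (isUnit_of_tdeg_zero hr0 (by omega))
    set e := r.totalDegree with hedef
    set W : Submodule K (MvPolynomial (Fin 2) K) :=
      (homogeneousSubmodule (Fin 2) K (b + d)).comap (LinearMap.mulRight K r) with hWdef
    have hWmem : ∀ α : Fin 3 → MvPolynomial (Fin 2) K, (∀ i, (α i).IsHomogeneous b) →
        sigmaMap K ψ α ∈ W := by
      intro α hα
      have hmul : sigmaMap K ψ α * r = sigmaMap K φ α := by
        rw [sigmaMap_apply, sigmaMap_apply, Finset.sum_mul]
        refine Finset.sum_congr rfl fun i _ => ?_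
        rw [hψ i]; ring
      rw [hWdef, Submodule.mem_comap, LinearMap.mulRight_apply, hmul, sigmaMap_apply,
        mem_homogeneousSubmodule]
      exact IsHomogeneous.sum _ _ _ (fun i _ => (hα i).mul (hφd i))
    have hkey : ∀ w : MvPolynomial (Fin 2) K, w ∈ W → w ≠ 0 → w.totalDegree + e = b + d := by
      intro w hw hw0
      have hwr : w * r ∈ homogeneousSubmodule (Fin 2) K (b + d) := by
        rw [hWdef, Submodule.mem_comap, LinearMap.mulRight_apply] at hw
        exact hw
      have hwr0 : w * r ≠ 0 := mul_ne_zero hw0 hr0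
      have h1 := ((mem_homogeneousSubmodule _ _).mp hwr).totalDegree hwr0
      rw [tdeg_mul hw0 hr0] at h1
      omega
    have hker0 : ∀ x : W, homogeneousComponent (b + d - e) (x : MvPolynomial (Fin 2) K) = 0 →
        x = 0 := by
      intro x hx
      by_contra hx0
      have hxne : (x : MvPolynomial (Fin 2) K) ≠ 0 := fun h => hx0 (Subtype.ext h)
      have hdeg := hkey x x.2 hxne
      have htop := top_ne hxne
      rw [show (x : MvPolynomial (Fin 2) K).totalDegree = b + d - e by omega] at htop
      exact htop hx
    let j : W →ₗ[K] homogeneousSubmodule (Fin 2) K (b + d - e) :=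
      LinearMap.codRestrict _ ((homogeneousComponent (b + d - e)).comp W.subtype)
        (fun x => homogeneousComponent_mem _ _)
    have hjinj : Function.Injective j := by
      rw [← LinearMap.ker_eq_bot]
      apply (Submodule.eq_bot_iff _).mpr
      intro x hx
      rw [LinearMap.mem_ker] at hx
      have hx' : homogeneousComponent (b + d - e) (x : MvPolynomial (Fin 2) K) = 0 :=
        congrArg Subtype.val hx
      exact hker0 x hx'
    haveI : FiniteDimensional K W := FiniteDimensional.of_injective j hjinj
    have hWrank : Module.finrank K W ≤ b + d - e + 1 :=
      (LinearMap.finrank_le_finrank_of_injective hjinj).trans (finrank_hom _).le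
    have hcount := count_le φ ψ r hr0 hψ b W hWmem
    by_cases hWbot : W = ⊥
    · rw [hWbot, finrank_bot] at hcount
      omega
    · obtain ⟨w, hwW, hw0⟩ := Submodule.exists_mem_ne_zero_of_ne_bot hWbot
      have hwdeg := hkey w hwW hw0
      omega

end AscenziAux

/-- Ascenzi's bounds: if the rational plane curve `C` of degree
`d` has a point of multiplicity `m` and splitting type `(a,b)`, `a ≤ b`, then
`min(m, d−m) ≤ a ≤ min(d−m, ⌊d/2⌋)`; in particular if `d ≤ 2m` then
`(a,b) = (d−m, m)` and if `d = 2m+1` then `(a,b) = (m, m+1)`. -/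
theorem ascenzi_bounds [IsAlgClosed K] (d m : ℕ) (hm : 1 ≤ m) (hmd : m ≤ d)
    (φ : Fin 3 → MvPolynomial (Fin 2) K) (hφ : ParamOfDegree K d φ)
    (hmult : HasPointOfMultiplicity K d m φ)
    (a b : ℕ) (hab : a ≤ b) (hsum : a + b = d)
    (hsplit : IsSplittingType K φ a b) :
    (min m (d - m) ≤ a ∧ a ≤ min (d - m) (d / 2)) ∧
    (d ≤ 2 * m → a = d - m ∧ b = m) ∧
    (d = 2 * m + 1 → a = m ∧ b = m + 1) := by
  
  classical
  obtain ⟨hφd, -⟩ := hφ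
  obtain ⟨ℓ₁, ℓ₂, q, h, g, hqh, hhh, hgh, hφ1, hφ2, hrel⟩ := hmult
  have star := AscenziAux.no_common_factor φ hφd hab hsum hsplit
  have hd1 : 1 ≤ d := hm.trans hmd
  have hXu : ¬ IsUnit (X (0 : Fin 2) : MvPolynomial (Fin 2) K) := by
    intro hX
    have h0 := AscenziAux.isUnit_tdeg hX
    rw [totalDegree_X] at h0
    exact one_ne_zero h0
  have hgh0 : ¬ (h = 0 ∧ g = 0) := by
    rintro ⟨rfl, rfl⟩
    exact hXu (hrel _ (dvd_zero _) (dvd_zero _))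
  have hq0 : q ≠ 0 := by
    rintro rfl
    have hunit : IsUnit (φ 0) := by
      apply star
      intro i
      fin_cases i
      · exact dvd_rfl
      · show φ 0 ∣ φ 1
        rw [hφ1, zero_mul, add_zero]; exact dvd_mul_left _ _
      · show φ 0 ∣ φ 2
        rw [hφ2, zero_mul, add_zero]; exact dvd_mul_left _ _
    have h0 : (φ 0) ≠ 0 := hunit.ne_zero
    have h1 := (hφd 0).totalDegree h0
    rw [AscenziAux.isUnit_tdeg hunit] at h1
    omega
  have hub : a ≤ d - m := by
    by_contra hlt
    push_neg at hlt
    have hs := hsplit (d - m)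
    have hz1 : max (0:ℤ) (((d - m : ℕ) : ℤ) + 1 - a) = 0 := max_eq_left (by omega)
    have hz2 : max (0:ℤ) (((d - m : ℕ) : ℤ) + 1 - b) = 0 := max_eq_left (by omega)
    rw [hz1, hz2, add_zero] at hs
    have hbot : syz K φ (d - m) = ⊥ := Submodule.finrank_eq_zero.mp (by exact_mod_cast hs)
    set ν : Fin 3 → MvPolynomial (Fin 2) K := ![C ℓ₂ * h - C ℓ₁ * g, g, -h] with hν
    have hνmem : ν ∈ syz K φ (d - m) := by
      rw [AscenziAux.syz_eq, Submodule.mem_inf]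
      constructor
      · rw [AscenziAux.mem_Tsub]
        intro i
        fin_cases i
        · exact (hhh.C_mul ℓ₂).sub (hgh.C_mul ℓ₁)
        · exact hgh
        · exact hhh.neg
      · rw [LinearMap.mem_ker, AscenziAux.sigmaMap_apply, Fin.sum_univ_three]
        simp only [hν, Matrix.cons_val_zero, Matrix.cons_val_one, Matrix.head_cons,
          Matrix.cons_val_two, Matrix.tail_cons]
        rw [hφ1, hφ2]
        ring
    rw [hbot, Submodule.mem_bot] at hνmem
    apply hgh0
    constructor
    · have h2 := congrFun hνmem 2
      simp only [hν, Matrix.cons_val_two, Matrix.tail_cons, Matrix.head_cons,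
        Pi.zero_apply, neg_eq_zero] at h2
      exact h2
    · have h1 := congrFun hνmem 1
      simp only [hν, Matrix.cons_val_one, Matrix.head_cons, Pi.zero_apply] at h1
      exact h1
  have hlb : min m (d - m) ≤ a := by
    by_contra hlt
    push_neg at hlt
    have ham : a < m := lt_of_lt_of_le hlt (min_le_left _ _)
    have hadm : a < d - m := lt_of_lt_of_le hlt (min_le_right _ _)
    have hs := hsplit a
    have hpos : syz K φ a ≠ ⊥ := by
      intro hbot
      rw [hbot, finrank_bot] at hs
      have h1 : max (0:ℤ) ((a:ℤ) + 1 - a) = 1 := by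
        rw [max_eq_right] <;> omega
      have h2 : (0:ℤ) ≤ max 0 ((a:ℤ) + 1 - b) := le_max_left _ _
      omega
    obtain ⟨α, hαmem, hα0⟩ := Submodule.exists_mem_ne_zero_of_ne_bot hpos
    rw [AscenziAux.syz_eq, Submodule.mem_inf] at hαmem
    obtain ⟨hαT, hαker⟩ := hαmem
    have hhom : ∀ i, (α i).IsHomogeneous a := AscenziAux.mem_Tsub.mp hαT
    rw [LinearMap.mem_ker, AscenziAux.sigmaMap_apply, Fin.sum_univ_three] at hαker
    set β := α 0 + C ℓ₁ * α 1 + C ℓ₂ * α 2 with hβdef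
    have hβhom : β.IsHomogeneous a := ((hhom 0).add ((hhom 1).C_mul ℓ₁)).add ((hhom 2).C_mul ℓ₂)
    have hkey : β * φ 0 + q * (α 1 * h + α 2 * g) = 0 := by
      rw [hβdef]
      rw [hφ1, hφ2] at hαker
      linear_combination hαker
    by_cases hβ : β = 0
    · have hsum0 : α 1 * h + α 2 * g = 0 := by
        rw [hβ, zero_mul, zero_add] at hkey
        exact (mul_eq_zero.mp hkey).resolve_left hq0
      have hgne : g ≠ 0 := by
        rintro rfl
        have hhu : IsUnit h := hrel h dvd_rfl (dvd_zero _)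
        have hh0 : h ≠ 0 := hhu.ne_zero
        have h1 := hhh.totalDegree hh0
        rw [AscenziAux.isUnit_tdeg hhu] at h1
        omega
      have hdvd : g ∣ α 1 * h := ⟨-(α 2), by linear_combination hsum0⟩
      have hrp : IsRelPrime g h := fun r h1 h2 => hrel r h2 h1
      have hdvd2 : g ∣ α 1 := hrp.dvd_of_dvd_mul_right hdvd
      by_cases hα1 : α 1 = 0
      · have hα2 : α 2 = 0 := by
          rw [hα1, zero_mul, zero_add] at hsum0
          exact (mul_eq_zero.mp hsum0).resolve_right hgne
        have hα00 : α 0 = 0 := by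
          have hβ' := hβ
          rw [hβdef, hα1, hα2] at hβ'
          simpa using hβ'
        apply hα0
        funext i
        fin_cases i
        · simpa using hα00
        · simpa using hα1
        · simpa using hα2
      · obtain ⟨c, hc⟩ := hdvd2
        have hcne : c ≠ 0 := by
          rintro rfl
          rw [mul_zero] at hc
          exact hα1 hc
        have h1 := AscenziAux.tdeg_mul hgne hcne
        rw [← hc, (hhom 1).totalDegree hα1, hgh.totalDegree hgne] at h1
        omega
    · have hqd : q ∣ β * φ 0 := ⟨-(α 1 * h + α 2 * g), by linear_combination hkey⟩
      have hrp : IsRelPrime q (φ 0) := by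
        intro r h1 h2
        apply star r
        intro i
        fin_cases i
        · exact h2
        · show r ∣ φ 1
          rw [hφ1]; exact dvd_add (h2.mul_left _) (h1.mul_right _)
        · show r ∣ φ 2
          rw [hφ2]; exact dvd_add (h2.mul_left _) (h1.mul_right _)
      have hqβ : q ∣ β := hrp.dvd_of_dvd_mul_right hqd
      obtain ⟨c, hc⟩ := hqβ
      have hcne : c ≠ 0 := by
        rintro rfl
        rw [mul_zero] at hc
        exact hβ hc
      have h1 := AscenziAux.tdeg_mul hq0 hcne
      rw [← hc, hβhom.totalDegree hβ, hqh.totalDegree hq0] at h1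
      omega
  exact ⟨⟨hlb, by omega⟩, fun hd2 => by omega, fun hd2 => by omega⟩
end
end

section
/- Let C ⊂ P^2 be a rational curve of degree d ≥ 2 with splitting type (a,b), a ≤ b, given by a parameterization φ = (φ_0, φ_1, φ_2). If σ(φ) is the saturation degree of the ideal (φ_0, φ_1, φ_2) ⊂ K[s,t], then b + d − 1 = σ(φ) ≤ 2d − 2. -/
/- A rational plane curve is given parametrically by three homogeneous forms
φ_0, φ_1, φ_2 ∈ K[s,t]_d.  By Grothendieck splitting, φ*Ω_{P²}(1) ≅ O(−a)⊕O(−b);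
pulling back the Euler sequence identifies the graded module ⊕_k H⁰(φ*Ω(1)(k+d))
with the module of syzygies of (φ_0,φ_1,φ_2).  Thus "(a,b) is the splitting type"
is faithfully encoded by: for every k, the space of degree-k syzygies has
dimension max(0,k+1−a) + max(0,k+1−b), which says precisely that the syzygy
module is S(−a) ⊕ S(−b). -/

noncomputable section

open MvPolynomial

variable (K : Type) [Field K]

-- degree of a Fin 2 finsupp
lemma deg2 (d : Fin 2 →₀ ℕ) : d.degree = d 0 + d 1 := by
  have h : ∑ i ∈ d.support, d i = ∑ i : Fin 2, d i :=
    Finset.sum_subset (Finset.subset_univ _)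
      (fun i _ hi => Finsupp.notMem_support_iff.mp hi)
  rw [Finsupp.degree_apply, h, Fin.sum_univ_two]

/-- exponents of homogeneous degree-`k` monomials in two variables. -/
def expEquiv (k : ℕ) : {d : Fin 2 →₀ ℕ // d.degree = k} ≃ Fin (k+1) where
  toFun d := ⟨d.1 0, by have h := Finsupp.le_degree 0 d.1; rw [d.2] at h; omega⟩
  invFun i := ⟨Finsupp.single 0 (i : ℕ) + Finsupp.single 1 (k - (i : ℕ)), by
    have := i.2
    simp [deg2, Finsupp.single_apply]
    omega⟩
  left_inv d := by
    ext j
    fin_cases j <;> simp [Finsupp.single_apply]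
    have h := deg2 d.1
    rw [d.2] at h
    omega
  right_inv i := by
    ext
    simp [Finsupp.single_apply]

instance (k : ℕ) : Fintype {d : Fin 2 →₀ ℕ // d.degree = k} :=
  Fintype.ofEquiv _ (expEquiv k).symm

instance (k : ℕ) : Fintype ↥{d : Fin 2 →₀ ℕ | d.degree = k} :=
  Fintype.ofEquiv _ (expEquiv k).symm

/-- The degree-`k` graded piece of `K[s,t]` is `(k+1)`-dimensional. -/
def homEquiv (k : ℕ) :
    (homogeneousSubmodule (Fin 2) K k) ≃ₗ[K] (Fin (k+1) → K) :=
  (LinearEquiv.ofEq _ _ (homogeneousSubmodule_eq_finsupp_supported (Fin 2) K k)).trans <|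
    (AddMonoidAlgebra.supportedEquivFinsupp _).trans <|
      (Finsupp.linearEquivFunOnFinite K K _).trans <|
        LinearEquiv.funCongrLeft K K (expEquiv k).symm

instance (k : ℕ) : FiniteDimensional K (homogeneousSubmodule (Fin 2) K k) :=
  Module.Finite.equiv (homEquiv K k).symm

lemma finrank_hom (k : ℕ) :
    Module.finrank K (homogeneousSubmodule (Fin 2) K k) = k + 1 := by
  rw [(homEquiv K k).finrank_eq, Module.finrank_fin_fun]

variable {K}

/-- Homogeneous component of a product with a homogeneous polynomial. -/
lemma homComp_mul {n : ℕ} {J : Type} [Fintype J] [DecidableEq J] {F : MvPolynomial J K} (hF : F.IsHomogeneous n)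
    (c : MvPolynomial J K) (m : ℕ) :
    homogeneousComponent (m + n) (c * F) = homogeneousComponent m c * F := by
  conv_lhs => rw [← sum_homogeneousComponent c]
  rw [Finset.sum_mul, map_sum]
  have key : ∀ j, homogeneousComponent (m + n) (homogeneousComponent j c * F)
      = if j = m then homogeneousComponent j c * F else 0 := by
    intro j
    rw [homogeneousComponent_of_mem (((homogeneousComponent_isHomogeneous j c).mul hF))]
    by_cases h : j = m
    · simp [h]
    · rw [if_neg (fun hc => h (by omega)), if_neg h]
  simp only [key]
  rw [Finset.sum_ite_eq' (Finset.range (c.totalDegree + 1)) m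
    (fun j => homogeneousComponent j c * F)]
  split_ifs with h
  · rfl
  · rw [homogeneousComponent_eq_zero, zero_mul]
    simp only [Finset.mem_range, not_lt] at h
    omega

lemma homComp_mul_lt {n : ℕ} {J : Type} [Fintype J] [DecidableEq J] {F : MvPolynomial J K} (hF : F.IsHomogeneous n)
    (c : MvPolynomial J K) {m : ℕ} (hm : m < n) :
    homogeneousComponent m (c * F) = 0 := by
  conv_lhs => rw [← sum_homogeneousComponent c]
  rw [Finset.sum_mul, map_sum]
  apply Finset.sum_eq_zero
  intro j _
  rw [homogeneousComponent_of_mem (((homogeneousComponent_isHomogeneous j c).mul hF))]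
  rw [if_neg (by omega)]

variable (K)

lemma sigmaMap_apply (φ : Fin 3 → MvPolynomial (Fin 2) K)
    (α : Fin 3 → MvPolynomial (Fin 2) K) :
    sigmaMap K φ α = ∑ i, α i * φ i := by
  simp [sigmaMap]

/-- The multiplication map on degree-`m` forms. -/
def Lmap (φ : Fin 3 → MvPolynomial (Fin 2) K) (d : ℕ)
    (hφ : ∀ i, (φ i).IsHomogeneous d) (m : ℕ) :
    (Fin 3 → homogeneousSubmodule (Fin 2) K m) →ₗ[K]
      homogeneousSubmodule (Fin 2) K (m + d) where
  toFun c := ⟨∑ i, (c i : MvPolynomial (Fin 2) K) * φ i,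
    Submodule.sum_mem _ fun i _ => ((c i).2).mul (hφ i)⟩
  map_add' x y := Subtype.ext (by simp [add_mul, Finset.sum_add_distrib])
  map_smul' r x := Subtype.ext (by simp [Finset.smul_sum, smul_mul_assoc])

def kerEquivSyz (φ : Fin 3 → MvPolynomial (Fin 2) K) (d : ℕ)
    (hφ : ∀ i, (φ i).IsHomogeneous d) (m : ℕ) :
    LinearMap.ker (Lmap K φ d hφ m) ≃ₗ[K] syz K φ m where
  toFun x := ⟨fun i => ((x : Fin 3 → homogeneousSubmodule (Fin 2) K m) i :
      MvPolynomial (Fin 2) K), by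
    refine Submodule.mem_inf.mpr ⟨(Submodule.mem_iInf _).mpr fun i => (x.1 i).2, ?_⟩
    rw [LinearMap.mem_ker, sigmaMap_apply]
    exact congrArg Subtype.val x.2⟩
  map_add' x y := Subtype.ext (funext fun i => rfl)
  map_smul' r x := Subtype.ext (funext fun i => rfl)
  invFun y := ⟨fun i => ⟨y.1 i, (Submodule.mem_iInf _).mp (Submodule.mem_inf.mp y.2).1 i⟩, by
    have h := (Submodule.mem_inf.mp y.2).2
    rw [LinearMap.mem_ker, sigmaMap_apply] at h
    exact Subtype.ext h⟩
  left_inv x := Subtype.ext (funext fun i => Subtype.ext rfl)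
  right_inv y := Subtype.ext (funext fun i => rfl)

variable {K}

lemma mem_range_Lmap {φ : Fin 3 → MvPolynomial (Fin 2) K} {d : ℕ}
    (hφ : ∀ i, (φ i).IsHomogeneous d) (m : ℕ) {f : MvPolynomial (Fin 2) K}
    (hf : f.IsHomogeneous (m + d)) (hmem : f ∈ Ideal.span (Set.range φ)) :
    (⟨f, hf⟩ : homogeneousSubmodule (Fin 2) K (m + d)) ∈
      LinearMap.range (Lmap K φ d hφ m) := by
  obtain ⟨c, hc⟩ := (Ideal.mem_span_range_iff_exists_fun (v := φ) (x := f)).mp hmem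
  refine ⟨fun i => ⟨homogeneousComponent m (c i),
    homogeneousComponent_isHomogeneous m (c i)⟩, ?_⟩
  apply Subtype.ext
  show ∑ i, homogeneousComponent m (c i) * φ i = f
  have key : ∀ i, homogeneousComponent m (c i) * φ i
      = homogeneousComponent (m + d) (c i * φ i) :=
    fun i => (homComp_mul (hφ i) (c i) m).symm
  simp_rw [key]
  rw [← map_sum (homogeneousComponent (m+d)), hc, homogeneousComponent_of_mem hf, if_pos rfl]

lemma range_Lmap_mem_span {φ : Fin 3 → MvPolynomial (Fin 2) K} {d : ℕ}
    (hφ : ∀ i, (φ i).IsHomogeneous d) (m : ℕ)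
    {x : homogeneousSubmodule (Fin 2) K (m + d)}
    (hx : x ∈ LinearMap.range (Lmap K φ d hφ m)) :
    (x : MvPolynomial (Fin 2) K) ∈ Ideal.span (Set.range φ) := by
  obtain ⟨c, rfl⟩ := hx
  show (∑ i, (c i : MvPolynomial (Fin 2) K) * φ i) ∈ Ideal.span (Set.range φ)
  exact Ideal.sum_mem _ fun i _ =>
    Ideal.mul_mem_left _ _ (Ideal.subset_span (Set.mem_range_self i))

set_option synthInstance.maxHeartbeats 1000000 in
lemma finrank_range_Lmap {φ : Fin 3 → MvPolynomial (Fin 2) K} {d : ℕ}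
    (hφ : ∀ i, (φ i).IsHomogeneous d) (m : ℕ) :
    Module.finrank K (LinearMap.range (Lmap K φ d hφ m))
      + Module.finrank K (syz K φ m) = 3 * (m + 1) := by
  have hdom : Module.finrank K (Fin 3 → ↥(homogeneousSubmodule (Fin 2) K m))
      = 3 * (m + 1) := by
    rw [Module.finrank_pi_fintype]
    simp [finrank_hom, Finset.sum_const, mul_comm]
  have hk : Module.finrank K (LinearMap.ker (Lmap K φ d hφ m))
      = Module.finrank K (syz K φ m) := (kerEquivSyz K φ d hφ m).finrank_eq
  have h := LinearMap.finrank_range_add_finrank_ker (Lmap K φ d hφ m)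
  rw [hdom, hk] at h
  exact h

lemma span_step {φ : Fin 3 → MvPolynomial (Fin 2) K} {i : ℕ}
    (h : ∀ f : MvPolynomial (Fin 2) K, f.IsHomogeneous i → f ∈ Ideal.span (Set.range φ)) :
    ∀ f : MvPolynomial (Fin 2) K, f.IsHomogeneous (i + 1) →
      f ∈ Ideal.span (Set.range φ) := by
  intro f hf
  rw [f.as_sum]
  apply Ideal.sum_mem
  intro v hv
  have hdeg : v.degree = i + 1 := by
    by_contra h'
    exact MvPolynomial.mem_support_iff.mp hv (hf.coeff_eq_zero h')
  have hd2 := deg2 v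
  have hex : ∃ j : Fin 2, v j ≠ 0 := by
    by_contra h'
    push_neg at h'
    have h0 := h' 0
    have h1 := h' 1
    omega
  obtain ⟨j, hj⟩ := hex
  have hle : ∀ k, (Finsupp.single j 1) k ≤ v k := by
    intro k
    rcases eq_or_ne j k with rfl | hne
    · simpa [Finsupp.single_apply] using Nat.one_le_iff_ne_zero.mpr hj
    · simp [Finsupp.single_apply, hne]
  have hv' : v = Finsupp.single j 1 + (v - Finsupp.single j 1) := by
    ext k
    have e := Finsupp.tsub_apply v (Finsupp.single j 1) k
    have := hle k
    simp only [Finsupp.add_apply]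
    omega
  rw [hv', monomial_single_add, pow_one]
  apply Ideal.mul_mem_left
  apply h
  apply isHomogeneous_monomial
  have hdw := deg2 (v - Finsupp.single j 1)
  have e0 := Finsupp.tsub_apply v (Finsupp.single j 1) 0
  have e1 := Finsupp.tsub_apply v (Finsupp.single j 1) 1
  have hsingle : (Finsupp.single j 1) 0 + (Finsupp.single j 1) 1 = 1 := by
    fin_cases j <;> simp
  have hl0 := hle 0
  have hl1 := hle 1
  omega

lemma span_upward {φ : Fin 3 → MvPolynomial (Fin 2) K} {i : ℕ}
    (h : ∀ f : MvPolynomial (Fin 2) K, f.IsHomogeneous i → f ∈ Ideal.span (Set.range φ))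
    (k : ℕ) :
    ∀ f : MvPolynomial (Fin 2) K, f.IsHomogeneous (i + k) →
      f ∈ Ideal.span (Set.range φ) := by
  induction k with
  | zero => exact h
  | succ n ih => exact span_step ih

lemma eq_C_of_isHomogeneous_zero {p : MvPolynomial (Fin 2) K}
    (h : p.IsHomogeneous 0) : p = C (coeff 0 p) := by
  ext v
  rw [coeff_C]
  split_ifs with hv
  · rw [hv]
  · exact h.coeff_eq_zero
      (fun h0 => hv ((Finsupp.degree_eq_zero_iff v).mp h0).symm)

variable (K)

/-- let `C ⊂ P²` be a rational curve of degree `d ≥ 2` with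
splitting type `(a,b)`, `a ≤ b`, parameterized by `φ`.  Since the `φ_i` have no
common factor, `sat(J) = (s,t)` and the saturation degree `σ(φ)` is the least
`i` with `J_i = S_i`.  Then `b + d − 1 = σ(φ) ≤ 2d − 2`. -/
theorem saturation_degree_eq [IsAlgClosed K] (d : ℕ) (hd : 2 ≤ d)
    (φ : Fin 3 → MvPolynomial (Fin 2) K) (hφ : ParamOfDegree K d φ)
    (hcop : ∀ r : MvPolynomial (Fin 2) K, (∀ i, r ∣ φ i) → IsUnit r)
    (a b : ℕ) (hab : a ≤ b) (hsum : a + b = d)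
    (hsplit : IsSplittingType K φ a b)
    (σ : ℕ)
    (hσ : IsLeast {i : ℕ | ∀ f : MvPolynomial (Fin 2) K, f.IsHomogeneous i →
      f ∈ Ideal.span (Set.range φ)} σ) :
    b + d - 1 = σ ∧ σ ≤ 2 * d - 2 := by
  obtain ⟨hφd, F, hF, hFirr, hker⟩ := hφ
  have hb1 : 1 ≤ b := by omega
  -- Step 1: a ≥ 1
  have ha1 : 1 ≤ a := by
    by_contra h0
    have ha0 : a = 0 := by omega
    have h1 := hsplit 0
    rw [ha0] at h1
    push_cast at h1
    have hpos : 0 < Module.finrank K (syz K φ 0) := by omega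
    have hne : syz K φ 0 ≠ ⊥ := by
      intro hb
      rw [hb, finrank_bot] at hpos
      exact lt_irrefl 0 hpos
    obtain ⟨x, hxmem, hx0⟩ := (Submodule.ne_bot_iff _).mp hne
    set k : Fin 3 → K := fun i => coeff 0 (x i) with hkdef
    have hxC : ∀ i, x i = C (k i) := fun i =>
      eq_C_of_isHomogeneous_zero ((Submodule.mem_iInf _).mp (Submodule.mem_inf.mp hxmem).1 i)
    have hsig : ∑ i, x i * φ i = 0 := by
      have h := (Submodule.mem_inf.mp hxmem).2
      rw [LinearMap.mem_ker, sigmaMap_apply] at h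
      exact h
    set ℓ : MvPolynomial (Fin 3) K := ∑ i, C (k i) * X i with hldef
    have hlhom : ℓ.IsHomogeneous 1 :=
      IsHomogeneous.sum _ _ _ fun i _ => (isHomogeneous_C _ _).mul (isHomogeneous_X _ _)
    have hlker : (MvPolynomial.aeval φ) ℓ = 0 := by
      rw [hldef, map_sum]
      have key : ∀ i : Fin 3, (MvPolynomial.aeval φ) (C (k i) * X i) = x i * φ i := by
        intro i
        rw [map_mul, aeval_C, aeval_X, hxC i]
        rfl
      rw [Finset.sum_congr rfl fun i _ => key i, hsig]
    have hlmem : ℓ ∈ Ideal.span {F} := by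
      rw [← hker]
      exact RingHom.mem_ker.mpr hlker
    obtain ⟨g, hg⟩ := Ideal.mem_span_singleton.mp hlmem
    have hl0 : ℓ = 0 := by
      have h1' : homogeneousComponent 1 ℓ = ℓ := by
        rw [homogeneousComponent_of_mem hlhom, if_pos rfl]
      rw [← h1', hg, mul_comm]
      exact homComp_mul_lt hF g (by omega)
    have hk0 : ∀ i, k i = 0 := by
      intro i
      have he : MvPolynomial.eval (Pi.single i (1 : K)) ℓ = k i := by
        rw [hldef, map_sum]
        simp [Pi.single_apply]
      rw [hl0, map_zero] at he
      exact he.symm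
    apply hx0
    funext i
    rw [hxC i, hk0 i, map_zero]
    rfl
  -- Step 2: all forms of degree (b-1)+d are in the ideal
  have hmemN : ∀ f : MvPolynomial (Fin 2) K, f.IsHomogeneous ((b - 1) + d) →
      f ∈ Ideal.span (Set.range φ) := by
    have htop : LinearMap.range (Lmap K φ d hφd (b - 1)) = ⊤ := by
      apply Submodule.eq_top_of_finrank_eq
      have h1 := finrank_range_Lmap hφd (b - 1)
      have h2 := hsplit (b - 1)
      rw [finrank_hom]
      have hc : ((b - 1 : ℕ) : ℤ) = (b : ℤ) - 1 := by omega
      rw [hc] at h2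
      omega
    intro f hf
    have hmem : (⟨f, hf⟩ : homogeneousSubmodule (Fin 2) K ((b - 1) + d)) ∈
        LinearMap.range (Lmap K φ d hφd (b - 1)) := by
      rw [htop]; trivial
    exact range_Lmap_mem_span hφd (b - 1) hmem
  -- Step 3: not all forms of degree b+d-2 are in the ideal
  have hnot : ¬ (∀ f : MvPolynomial (Fin 2) K, f.IsHomogeneous (b + d - 2) →
      f ∈ Ideal.span (Set.range φ)) := by
    intro hmem
    by_cases hb2 : 2 ≤ b
    · have hEq : b + d - 2 = (b - 2) + d := by omega
      have htop : LinearMap.range (Lmap K φ d hφd (b - 2)) = ⊤ := by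
        rw [eq_top_iff]
        rintro x -
        have hx := mem_range_Lmap hφd (b - 2) x.2 (hmem x.1 (by rw [hEq]; exact x.2))
        exact hx
      have h1 := finrank_range_Lmap hφd (b - 2)
      rw [htop, finrank_top, finrank_hom] at h1
      have h2 := hsplit (b - 2)
      have hc : ((b - 2 : ℕ) : ℤ) = (b : ℤ) - 2 := by omega
      rw [hc] at h2
      omega
    · have hbb : b = 1 := by omega
      have hd1 : b + d - 2 = 1 := by omega
      have hX := hmem (X 0) (by rw [hd1]; exact isHomogeneous_X _ _)
      obtain ⟨c, hc⟩ := (Ideal.mem_span_range_iff_exists_fun (v := φ)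
        (x := (X 0 : MvPolynomial (Fin 2) K))).mp hX
      have hzero : (X 0 : MvPolynomial (Fin 2) K) = 0 := by
        have h1' : homogeneousComponent 1 (X 0 : MvPolynomial (Fin 2) K) = X 0 := by
          rw [homogeneousComponent_of_mem (isHomogeneous_X _ _), if_pos rfl]
        rw [← h1', ← hc, map_sum]
        exact Finset.sum_eq_zero fun i _ => homComp_mul_lt (hφd i) (c i) (by omega)
      exact X_ne_zero _ hzero
  -- conclude
  have hσ1 : ∀ f : MvPolynomial (Fin 2) K, f.IsHomogeneous σ →
      f ∈ Ideal.span (Set.range φ) := hσ.1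
  have hσle : σ ≤ (b - 1) + d := hσ.2 hmemN
  have hσgt : b + d - 2 < σ := by
    by_contra hle
    push_neg at hle
    apply hnot
    intro f hf
    exact span_upward hσ1 (b + d - 2 - σ) f
      (by rwa [show σ + (b + d - 2 - σ) = b + d - 2 from by omega])
  exact ⟨by omega, by omega⟩
end
end

section
/- Let X → P^2 be the blow up at r = 9 distinct points, with basis L, E_1, …, E_9 of Cl(X) and K_X = −3L + E_1 + ⋯ + E_9. A class E ∈ Cl(X) satisfies E^2 = E·K_X = −1 if and only if E = v + (v^2/2)K_X + E_9 for a (unique) element v ∈ Cl(X) with v·K_X = v·E_9 = 0. -/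
/- The divisor class group of the blow up of P^2 at 9 points is Z^10 with
orthogonal basis L, E_1, ..., E_9; coordinates: x 0 is the L-coefficient,
x i.succ (for i : Fin 9) is the E_{i+1}-coefficient. -/

/-- Intersection form: `L^2 = 1`, `E_i^2 = -1`, basis pairwise orthogonal. -/
def inter9 (x y : Fin 10 → ℤ) : ℤ := x 0 * y 0 - ∑ i : Fin 9, x i.succ * y i.succ

/-- The canonical class `K_X = -3L + E_1 + ⋯ + E_9`. -/
def K9 : Fin 10 → ℤ := fun j => if j = 0 then -3 else 1

/-- The class of the exceptional divisor `E_i` (for `i : Fin 9`). -/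
def Ei9 (i : Fin 9) : Fin 10 → ℤ := fun j => if j = i.succ then 1 else 0

lemma inter9_expand (x y : Fin 10 → ℤ) : inter9 x y = x 0 * y 0 - (x 1 * y 1 + x 2 * y 2 + x 3 * y 3 + x 4 * y 4 + x 5 * y 5 + x 6 * y 6 + x 7 * y 7 + x 8 * y 8 + x 9 * y 9) := by
  have hu : (Finset.univ : Finset (Fin 9)) = {0,1,2,3,4,5,6,7,8} := by decide
  have s0 : ((0:Fin 9).succ) = (1:Fin 10) := rfl
  have s1 : ((1:Fin 9).succ) = (2:Fin 10) := rfl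
  have s2 : ((2:Fin 9).succ) = (3:Fin 10) := rfl
  have s3 : ((3:Fin 9).succ) = (4:Fin 10) := rfl
  have s4 : ((4:Fin 9).succ) = (5:Fin 10) := rfl
  have s5 : ((5:Fin 9).succ) = (6:Fin 10) := rfl
  have s6 : ((6:Fin 9).succ) = (7:Fin 10) := rfl
  have s7 : ((7:Fin 9).succ) = (8:Fin 10) := rfl
  have s8 : ((8:Fin 9).succ) = (9:Fin 10) := rfl
  rw [inter9, hu]
  simp [Finset.sum_insert, s0,s1,s2,s3,s4,s5,s6,s7,s8]
  ring

lemma K0 : K9 0 = -3 := rfl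
lemma K1 : K9 1 = 1 := rfl
lemma K2 : K9 2 = 1 := rfl
lemma K3 : K9 3 = 1 := rfl
lemma K4 : K9 4 = 1 := rfl
lemma K5 : K9 5 = 1 := rfl
lemma K6 : K9 6 = 1 := rfl
lemma K7 : K9 7 = 1 := rfl
lemma K8_s9 : K9 8 = 1 := rfl
lemma K9v : K9 9 = 1 := rfl
lemma F0 : Ei9 8 0 = 0 := rfl
lemma F1 : Ei9 8 1 = 0 := rfl
lemma F2 : Ei9 8 2 = 0 := rfl
lemma F3 : Ei9 8 3 = 0 := rfl
lemma F4 : Ei9 8 4 = 0 := rfl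
lemma F5 : Ei9 8 5 = 0 := rfl
lemma F6 : Ei9 8 6 = 0 := rfl
lemma F7 : Ei9 8 7 = 0 := rfl
lemma F8 : Ei9 8 8 = 0 := rfl
lemma F9 : Ei9 8 9 = 1 := rfl

lemma sq_decomp (a : ℤ) : ∃ k, a * a = a + 2 * k := by
  obtain ⟨k, hk⟩ := Int.even_mul_succ_self (a - 1)
  exact ⟨k, by linear_combination hk⟩

/-- A class `E` satisfies `E^2 = E·K_X = −1` if and only if
`E = v + (v^2/2)K_X + E_9` for a unique `v` with `v·K_X = v·E_9 = 0`. -/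
theorem numerical_exceptional_classes (E : Fin 10 → ℤ) :
    (inter9 E E = -1 ∧ inter9 E K9 = -1) ↔
    ∃! v : Fin 10 → ℤ, inter9 v K9 = 0 ∧ inter9 v (Ei9 8) = 0 ∧
      E = v + (inter9 v v / 2) • K9 + Ei9 8 := by
  constructor
  · rintro ⟨h1, h2⟩
    rw [inter9_expand] at h1 h2
    rw [K0, K1, K2, K3, K4, K5, K6, K7, K8_s9, K9v] at h2
    have hv0 : (E - (E 9 - 1) • K9 - Ei9 8) 0 = E 0 + 3 * (E 9 - 1) := by
      simp only [Pi.sub_apply, Pi.smul_apply, smul_eq_mul, K0, F0]; ring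
    have hv1 : (E - (E 9 - 1) • K9 - Ei9 8) 1 = E 1 - (E 9 - 1) := by
      simp only [Pi.sub_apply, Pi.smul_apply, smul_eq_mul, K1, F1]; ring
    have hv2 : (E - (E 9 - 1) • K9 - Ei9 8) 2 = E 2 - (E 9 - 1) := by
      simp only [Pi.sub_apply, Pi.smul_apply, smul_eq_mul, K2, F2]; ring
    have hv3 : (E - (E 9 - 1) • K9 - Ei9 8) 3 = E 3 - (E 9 - 1) := by
      simp only [Pi.sub_apply, Pi.smul_apply, smul_eq_mul, K3, F3]; ring
    have hv4 : (E - (E 9 - 1) • K9 - Ei9 8) 4 = E 4 - (E 9 - 1) := by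
      simp only [Pi.sub_apply, Pi.smul_apply, smul_eq_mul, K4, F4]; ring
    have hv5 : (E - (E 9 - 1) • K9 - Ei9 8) 5 = E 5 - (E 9 - 1) := by
      simp only [Pi.sub_apply, Pi.smul_apply, smul_eq_mul, K5, F5]; ring
    have hv6 : (E - (E 9 - 1) • K9 - Ei9 8) 6 = E 6 - (E 9 - 1) := by
      simp only [Pi.sub_apply, Pi.smul_apply, smul_eq_mul, K6, F6]; ring
    have hv7 : (E - (E 9 - 1) • K9 - Ei9 8) 7 = E 7 - (E 9 - 1) := by
      simp only [Pi.sub_apply, Pi.smul_apply, smul_eq_mul, K7, F7]; ring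
    have hv8 : (E - (E 9 - 1) • K9 - Ei9 8) 8 = E 8 - (E 9 - 1) := by
      simp only [Pi.sub_apply, Pi.smul_apply, smul_eq_mul, K8_s9, F8]; ring
    have hv9 : (E - (E 9 - 1) • K9 - Ei9 8) 9 = 0 := by
      simp only [Pi.sub_apply, Pi.smul_apply, smul_eq_mul, K9v, F9]; ring
    have hvv : inter9 (E - (E 9 - 1) • K9 - Ei9 8) (E - (E 9 - 1) • K9 - Ei9 8)
        = 2 * (E 9 - 1) := by
      rw [inter9_expand, hv0, hv1, hv2, hv3, hv4, hv5, hv6, hv7, hv8, hv9]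
      linear_combination h1 - 2 * (E 9 - 1) * h2
    have hdiv : inter9 (E - (E 9 - 1) • K9 - Ei9 8) (E - (E 9 - 1) • K9 - Ei9 8) / 2
        = E 9 - 1 := by rw [hvv]; omega
    refine ⟨E - (E 9 - 1) • K9 - Ei9 8, ⟨?_, ?_, ?_⟩, ?_⟩
    · rw [inter9_expand, K0, K1, K2, K3, K4, K5, K6, K7, K8_s9, K9v,
        hv0, hv1, hv2, hv3, hv4, hv5, hv6, hv7, hv8, hv9]
      linarith
    · rw [inter9_expand, F0, F1, F2, F3, F4, F5, F6, F7, F8, F9, hv9]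
      ring
    · rw [hdiv]
      abel
    · rintro w ⟨hw1, hw2, hw3⟩
      rw [inter9_expand, F0, F1, F2, F3, F4, F5, F6, F7, F8, F9] at hw2
      have hw9 : w 9 = 0 := by linarith
      have h9 := congr_fun hw3 9
      simp only [Pi.add_apply, Pi.smul_apply, smul_eq_mul, K9v, F9] at h9
      have hd : inter9 w w / 2 = E 9 - 1 := by omega
      rw [hd] at hw3
      set a := E 9 with ha
      rw [hw3]
      abel
  · rintro ⟨v, ⟨hv1, hv2, hv3⟩, -⟩
    rw [inter9_expand, K0, K1, K2, K3, K4, K5, K6, K7, K8_s9, K9v] at hv1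
    rw [inter9_expand, F0, F1, F2, F3, F4, F5, F6, F7, F8, F9] at hv2
    have hv9 : v 9 = 0 := by linarith
    have heven : 2 * (inter9 v v / 2) = inter9 v v := by
      have hx : inter9 v v = v 0 * v 0 - (v 1 * v 1 + v 2 * v 2 + v 3 * v 3 + v 4 * v 4 + v 5 * v 5 + v 6 * v 6 + v 7 * v 7 + v 8 * v 8 + v 9 * v 9) := inter9_expand v v
      obtain ⟨k0, h0⟩ := sq_decomp (v 0)
      obtain ⟨k1, h1⟩ := sq_decomp (v 1)
      obtain ⟨k2, h2⟩ := sq_decomp (v 2)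
      obtain ⟨k3, h3⟩ := sq_decomp (v 3)
      obtain ⟨k4, h4⟩ := sq_decomp (v 4)
      obtain ⟨k5, h5⟩ := sq_decomp (v 5)
      obtain ⟨k6, h6⟩ := sq_decomp (v 6)
      obtain ⟨k7, h7⟩ := sq_decomp (v 7)
      obtain ⟨k8, h8⟩ := sq_decomp (v 8)
      rw [h0, h1, h2, h3, h4, h5, h6, h7, h8, hv9] at hx
      omega
    have h2d : v 0 * v 0 - (v 1 * v 1 + v 2 * v 2 + v 3 * v 3 + v 4 * v 4 + v 5 * v 5 + v 6 * v 6 + v 7 * v 7 + v 8 * v 8 + v 9 * v 9) = 2 * (inter9 v v / 2) := by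
      rw [← inter9_expand v v]; exact heven.symm
    rw [hv9] at h2d hv1 hv2
    have hE : ∀ j, E j = v j + (inter9 v v / 2) * K9 j + Ei9 8 j := by
      intro j
      have := congr_fun hv3 j
      simpa only [Pi.add_apply, Pi.smul_apply, smul_eq_mul] using this
    have hE0 := hE 0; have hE1 := hE 1; have hE2 := hE 2; have hE3 := hE 3
    have hE4 := hE 4; have hE5 := hE 5; have hE6 := hE 6; have hE7 := hE 7
    have hE8 := hE 8; have hE9 := hE 9
    rw [K0, F0] at hE0; rw [K1, F1] at hE1; rw [K2, F2] at hE2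
    rw [K3, F3] at hE3; rw [K4, F4] at hE4; rw [K5, F5] at hE5
    rw [K6, F6] at hE6; rw [K7, F7] at hE7; rw [K8_s9, F8] at hE8
    rw [K9v, F9, hv9] at hE9
    constructor
    · rw [inter9_expand, hE0, hE1, hE2, hE3, hE4, hE5, hE6, hE7, hE8, hE9]
      linear_combination h2d + 2 * (inter9 v v / 2) * hv1
    · rw [inter9_expand, K0, K1, K2, K3, K4, K5, K6, K7, K8_s9, K9v,
        hE0, hE1, hE2, hE3, hE4, hE5, hE6, hE7, hE8, hE9]
      linarith
end

section
/- Let X be the blow up of P^2 at 9 points, and fix an integer j. Then there are only finitely many classes E = d·L − m_1 E_1 − ⋯ − m_9 E_9 ∈ Cl(X) with d ≥ 0, E^2 = E·K_X = −1, and d − 2·max_i(m_i) ≤ j. Moreover, any such class satisfies d ≤ 3j + ⌊4√(4j+8)⌋ + 10. -/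
/-- `max_i m_i` for the class `E = dL − m_1E_1 − ⋯ − m_9E_9`. -/
def maxm (E : Fin 10 → ℤ) : ℤ :=
  Finset.univ.sup' Finset.univ_nonempty (fun i : Fin 9 => inter9 E (Ei9 i))

lemma inter9_Ei9 (E : Fin 10 → ℤ) (i : Fin 9) : inter9 E (Ei9 i) = -(E i.succ) := by
  unfold inter9 Ei9
  rw [if_neg (Fin.succ_ne_zero i).symm]
  rw [Finset.sum_eq_single i (fun b _ hb => by
    rw [if_neg (by simpa using hb), mul_zero]) (by simp)]
  simp

lemma sumsq_eq (E : Fin 10 → ℤ) (hEE : inter9 E E = -1) :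
    ∑ i : Fin 9, (E i.succ)^2 = (E 0)^2 + 1 := by
  unfold inter9 at hEE
  have : ∑ i : Fin 9, E i.succ * E i.succ = ∑ i : Fin 9, (E i.succ)^2 :=
    Finset.sum_congr rfl (fun i _ => (sq (E i.succ)).symm)
  rw [this] at hEE
  nlinarith [hEE]

lemma sum_eq (E : Fin 10 → ℤ) (hEK : inter9 E K9 = -1) :
    ∑ i : Fin 9, E i.succ = -3 * (E 0) + 1 := by
  unfold inter9 K9 at hEK
  rw [if_pos rfl] at hEK
  simp only [Fin.succ_ne_zero, if_false, mul_one] at hEK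
  linarith

/-- The key real-number inequality. -/
lemma real_key (D M J : ℝ) (hD : 0 ≤ D)
    (hA : (3*D - 1 - M)^2 ≤ 8 * (D^2 + 1 - M^2))
    (hB : D - J ≤ 2*M) : D ≤ 3*J + 8*Real.sqrt (J+2) + 10 := by
  set s := Real.sqrt (3*D + 4) with hsdef
  have hs0 : 0 ≤ s := Real.sqrt_nonneg _
  have hs : s^2 = 3*D + 4 := Real.sq_sqrt (by linarith)
  have h1 : (9*M - (3*D-1))^2 ≤ (4*s)^2 := by nlinarith
  have h2 : 9*M - (3*D-1) ≤ 4*s := by nlinarith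
  have hkey : 3*D + 2 - 9*J ≤ 8*s := by linarith
  have hJ2 : 0 ≤ J + 2 := by nlinarith [sq_nonneg (s-4)]
  set r := Real.sqrt (J+2) with hrdef
  have hr0 : 0 ≤ r := Real.sqrt_nonneg _
  have hr : r^2 = J + 2 := Real.sq_sqrt hJ2
  have hs4 : s - 4 ≤ 3*r := by nlinarith
  nlinarith

lemma sqrt_rewrite (j : ℤ) : 4 * Real.sqrt (4 * (j : ℝ) + 8) = 8 * Real.sqrt ((j:ℝ) + 2) := by
  rw [show (4:ℝ) * (j:ℝ) + 8 = 2^2 * ((j:ℝ)+2) by ring,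
    Real.sqrt_mul (by positivity), Real.sqrt_sq (by norm_num)]
  ring

/-- for fixed `j` there are only finitely many classes
`E = dL − Σ m_iE_i` with `d ≥ 0`, `E² = E·K = −1` and `d − 2 max m_i ≤ j`, and
each satisfies `d ≤ 3j + ⌊4√(4j+8)⌋ + 10`. -/
theorem finitely_many_low_classes (j : ℤ) :
    {E : Fin 10 → ℤ | 0 ≤ E 0 ∧ inter9 E E = -1 ∧ inter9 E K9 = -1 ∧
        E 0 - 2 * maxm E ≤ j}.Finite ∧
    ∀ E : Fin 10 → ℤ, 0 ≤ E 0 → inter9 E E = -1 → inter9 E K9 = -1 →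
      E 0 - 2 * maxm E ≤ j →
      E 0 ≤ 3 * j + ⌊4 * Real.sqrt (4 * (j : ℝ) + 8)⌋ + 10 := by
  have hbound : ∀ E : Fin 10 → ℤ, 0 ≤ E 0 → inter9 E E = -1 → inter9 E K9 = -1 →
      E 0 - 2 * maxm E ≤ j →
      E 0 ≤ 3 * j + ⌊4 * Real.sqrt (4 * (j : ℝ) + 8)⌋ + 10 := by
    intro E hd0 hEE hEK hj
    set d := E 0 with hddef
    set m : Fin 9 → ℤ := fun i => -(E i.succ) with hmdef
    have hsum : ∑ i : Fin 9, m i = 3*d - 1 := by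
      have h := sum_eq E hEK
      have h2 : ∑ i : Fin 9, m i = -∑ i : Fin 9, E i.succ := by
        simp [hmdef, Finset.sum_neg_distrib]
      rw [h2, h]; ring
    have hsumsq : ∑ i : Fin 9, (m i)^2 = d^2 + 1 := by
      have h := sumsq_eq E hEE
      have h2 : ∑ i : Fin 9, (m i)^2 = ∑ i : Fin 9, (E i.succ)^2 :=
        Finset.sum_congr rfl (fun i _ => by rw [hmdef]; ring)
      rw [h2, h]
    set M := maxm E with hMdef
    have hmax : M = Finset.univ.sup' Finset.univ_nonempty m := by
      rw [hMdef]
      unfold maxm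
      congr 1
      funext i
      rw [inter9_Ei9]
    obtain ⟨i₀, -, hi₀⟩ := Finset.exists_mem_eq_sup' (Finset.univ_nonempty) m
    have hMi₀ : M = m i₀ := by rw [hmax, hi₀]
    -- Cauchy–Schwarz on the other 8 coordinates
    have hcard : (Finset.univ.erase i₀).card = 8 := by
      rw [Finset.card_erase_of_mem (Finset.mem_univ _)]
      simp
    have hCS := sq_sum_le_card_mul_sum_sq (s := Finset.univ.erase i₀) (f := m)
    rw [hcard] at hCS
    have hesum : ∑ i ∈ Finset.univ.erase i₀, m i = 3*d - 1 - M := by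
      have h3 : m i₀ + ∑ i ∈ Finset.univ.erase i₀, m i = ∑ i : Fin 9, m i :=
        Finset.add_sum_erase _ _ (Finset.mem_univ i₀)
      rw [hsum] at h3
      omega
    have hesumsq : ∑ i ∈ Finset.univ.erase i₀, (m i)^2 = d^2 + 1 - M^2 := by
      have h3 : (m i₀)^2 + ∑ i ∈ Finset.univ.erase i₀, (m i)^2 = ∑ i : Fin 9, (m i)^2 :=
        Finset.add_sum_erase _ (fun i => (m i)^2) (Finset.mem_univ i₀)
      rw [hsumsq] at h3
      have hM2 : M^2 = (m i₀)^2 := by rw [hMi₀]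
      omega
    rw [hesum, hesumsq] at hCS
    have hA : ((3*(d:ℝ) - 1 - (M:ℝ))^2 ≤ 8 * ((d:ℝ)^2 + 1 - (M:ℝ)^2)) := by
      exact_mod_cast hCS
    have hB : (d:ℝ) - (j:ℝ) ≤ 2*(M:ℝ) := by
      have : d - j ≤ 2*M := by omega
      exact_mod_cast this
    have hD : (0:ℝ) ≤ (d:ℝ) := by exact_mod_cast hd0
    have hreal := real_key (d:ℝ) (M:ℝ) (j:ℝ) hD hA hB
    have hfloor : d - 3*j - 10 ≤ ⌊4 * Real.sqrt (4 * (j : ℝ) + 8)⌋ := by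
      rw [Int.le_floor, sqrt_rewrite]
      push_cast
      linarith
    omega
  refine ⟨?_, hbound⟩
  set B := 3 * j + ⌊4 * Real.sqrt (4 * (j : ℝ) + 8)⌋ + 10 with hBdef
  apply Set.Finite.subset (Set.Finite.pi (fun _ : Fin 10 =>
    Set.finite_Icc (-(B+1)) (B+1)))
  intro E hE
  obtain ⟨hd0, hEE, hEK, hj⟩ := hE
  have hdB : E 0 ≤ B := hbound E hd0 hEE hEK hj
  have hsq := sumsq_eq E hEE
  intro i _
  rcases Fin.eq_zero_or_eq_succ i with rfl | ⟨k, rfl⟩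
  · show E 0 ∈ Set.Icc (-(B+1)) (B+1)
    exact Set.mem_Icc.mpr ⟨by rw [hBdef]; omega, by rw [hBdef]; omega⟩
  · 
    have h1 : (E k.succ)^2 ≤ (E 0)^2 + 1 := by
      rw [← hsq]
      exact Finset.single_le_sum (fun i _ => sq_nonneg (E i.succ)) (Finset.mem_univ k)
    exact Set.mem_Icc.mpr ⟨by nlinarith [sq_nonneg (E k.succ + E 0 + 1)],
      by nlinarith [sq_nonneg (E k.succ - E 0 - 1)]⟩
end

section
/- Let X be the blow up of P^2 at 9 points. The only class E = dL − m_1E_1 − ⋯ − m_9E_9 with d ≥ 0, E^2 = E·K_X = −1 and d − 2m_1 ≤ −2 (where m_1 = max_i m_i) is, up to permutation of the E_i, E = 4L − 3E_1 − E_2 − ⋯ − E_9. -/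
lemma inter_Ei9 (E : Fin 10 → ℤ) (i : Fin 9) : inter9 E (Ei9 i) = -E i.succ := by
  simp only [inter9, Ei9, mul_ite, mul_one, mul_zero]
  rw [if_neg (fun h => (Fin.succ_ne_zero i) h.symm)]
  simp [Fin.succ_inj]

/-- the only class with `d ≥ 0`, `E² = E·K = −1` and
`d − 2·max m_i ≤ −2` is, up to permutation of the `E_i`,
`E = 4L − 3E_1 − E_2 − ⋯ − E_9`. -/
theorem unique_unbalanced_ascenzi_class (E : Fin 10 → ℤ)
    (hd : 0 ≤ E 0) (hself : inter9 E E = -1) (hK : inter9 E K9 = -1)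
    (hmax : E 0 - 2 * maxm E ≤ -2) :
    E 0 = 4 ∧ ∃ i0 : Fin 9, inter9 E (Ei9 i0) = 3 ∧
      ∀ i : Fin 9, i ≠ i0 → inter9 E (Ei9 i) = 1 := by
  set d := E 0 with hdd
  set m : Fin 9 → ℤ := fun i => -E i.succ with hm
  obtain ⟨i0, -, hi0⟩ := Finset.exists_mem_eq_sup' Finset.univ_nonempty
    (fun i : Fin 9 => inter9 E (Ei9 i))
  have hMdef : maxm E = m i0 := by rw [maxm, hi0, inter_Ei9]
  set M := m i0 with hMM
  have hle : ∀ i, m i ≤ M := by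
    intro i
    have := Finset.le_sup' (fun i : Fin 9 => inter9 E (Ei9 i)) (Finset.mem_univ i)
    rw [← maxm, hMdef, inter_Ei9] at this
    exact this
  have hsum_neg : ∑ i : Fin 9, m i = -∑ i : Fin 9, E i.succ := by
    simp [hm]
  have hs1 : ∑ i : Fin 9, m i = 3 * d - 1 := by
    have h1 : inter9 E K9 = d * (-3) - ∑ i : Fin 9, E i.succ := by
      simp [inter9, K9, Fin.succ_ne_zero, hdd]
    rw [h1] at hK
    rw [hsum_neg]; linarith
  have hs2 : ∑ i : Fin 9, m i ^ 2 = d ^ 2 + 1 := by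
    have h1 : inter9 E E = d * d - ∑ i : Fin 9, E i.succ * E i.succ := rfl
    rw [h1] at hself
    have h2 : ∑ i : Fin 9, m i ^ 2 = ∑ i : Fin 9, E i.succ * E i.succ := by
      apply Finset.sum_congr rfl; intro i _; simp [hm]; ring
    rw [h2]; nlinarith [hself]
  clear_value d m M
  have hmem : i0 ∈ Finset.univ (α := Fin 9) := Finset.mem_univ i0
  have hA : ∑ i ∈ Finset.univ.erase i0, m i = 3 * d - 1 - M := by
    rw [← Finset.add_sum_erase _ m hmem] at hs1
    linarith
  have hB : ∑ i ∈ Finset.univ.erase i0, m i ^ 2 = d ^ 2 + 1 - M ^ 2 := by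
    rw [← Finset.add_sum_erase _ (fun i => m i ^ 2) hmem, ← hMM] at hs2
    linarith
  have hcard : (Finset.univ.erase i0).card = 8 := by
    rw [Finset.card_erase_of_mem hmem]; simp
  have hCS := Finset.sum_mul_sq_le_sq_mul_sq (Finset.univ.erase i0)
    (fun _ => (1 : ℤ)) m
  simp only [one_mul, one_pow, Finset.sum_const, hcard, nsmul_eq_mul] at hCS
  rw [hA, hB] at hCS
  have hCS' : (3 * d - 1 - M) ^ 2 ≤ 8 * (d ^ 2 + 1 - M ^ 2) := by push_cast at hCS; linarith
  rw [hMdef] at hmax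
  have ht : 0 ≤ 2 * M - d - 2 := by linarith
  have hnn : 0 ≤ (2 * M - d - 2) * (6 * d + 40 + 9 * (2 * M - d - 2)) :=
    mul_nonneg ht (by linarith)
  have hkey : (d - 4) ^ 2 ≤ 0 := by
    have e : (d - 4) ^ 2 = 4 * ((3 * d - 1 - M) ^ 2 - 8 * (d ^ 2 + 1 - M ^ 2)) -
        (2 * M - d - 2) * (6 * d + 40 + 9 * (2 * M - d - 2)) := by ring
    linarith [e, hCS', hnn]
  have hd4 : d = 4 := by nlinarith [sq_nonneg (d - 4)]
  have hM3 : M = 3 := by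
    have hMge : 3 ≤ M := by linarith
    rw [hd4] at hCS'
    have e3 : (M - 3) * (9 * M + 5) = (3 * 4 - 1 - M) ^ 2 - 8 * (4 ^ 2 + 1 - M ^ 2) := by ring
    have e2 : (M - 3) * (9 * M + 5) ≤ 0 := by linarith [e3, hCS']
    have hMle : M ≤ 3 := by
      by_contra h
      push_neg at h
      have h1 : 0 < M - 3 := by linarith
      have h2 : 0 < 9 * M + 5 := by linarith
      linarith [mul_pos h1 h2]
    linarith
  refine ⟨hd4, i0, ?_, ?_⟩
  · rw [inter_Ei9]
    have h := hMM
    rw [hm] at h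
    simp only at h
    linarith
  have hz : ∑ i ∈ Finset.univ.erase i0, (m i - 1) ^ 2 = 0 := by
    have e1 : ∀ i ∈ Finset.univ.erase i0, (m i - 1) ^ 2 = (m i ^ 2 - 2 * m i) + 1 := by
      intro i _; ring
    rw [Finset.sum_congr rfl e1, Finset.sum_add_distrib, Finset.sum_sub_distrib,
      hB, ← Finset.mul_sum, hA, Finset.sum_const, hcard]
    rw [hd4, hM3]; ring
  have hzz := (Finset.sum_eq_zero_iff_of_nonneg (fun i _ => sq_nonneg (m i - 1))).mp hz
  intro i hi
  have h0 := hzz i (Finset.mem_erase.mpr ⟨hi, Finset.mem_univ i⟩)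
  have h1 : m i - 1 = 0 := by
    have := sq_eq_zero_iff.mp h0
    exact this
  rw [inter_Ei9]
  have h2 : m i = 1 := by linarith
  rw [hm] at h2
  exact h2
end

section
/- Let W be the Weyl group of the 7-point blow up X of P^2, acting on Cl(X) ≅ Z^8, generated by the reflections s_v(D) = D + (v·D)v for v ∈ {L−E_1−E_2−E_3, E_1−E_2, …, E_6−E_7}. If D ∈ Cl(X) is nef with D^2 = −2 − D·K_X (numerically a smooth rational curve class) and is a non-negative integer combination of H_0 = L, H_1 = L−E_1, H_2 = 2L−E_1−E_2, H_i = 3L−E_1−⋯−E_i (3 ≤ i ≤ 7), then D is one of: H_0 + dH_1, H_2 + dH_1 (d ≥ 0), 2H_0, or H_1. -/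
/- Cl(X) ≅ Z^8 for the blow up X of P^2 at 7 points: coordinate 0 is the
L-coefficient, coordinate i.succ (i : Fin 7) the E_{i+1}-coefficient. -/

def inter8 (x y : Fin 8 → ℤ) : ℤ := x 0 * y 0 - ∑ i : Fin 7, x i.succ * y i.succ

def K8 : Fin 8 → ℤ := fun j => if j = 0 then -3 else 1

/-- The classes `H_0 = L`, `H_1 = L − E_1`, `H_2 = 2L − E_1 − E_2`,
`H_i = 3L − E_1 − ⋯ − E_i` for `3 ≤ i ≤ 7`. -/
def H7 (j : Fin 8) : Fin 8 → ℤ := fun k =>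
  if k = 0 then (if (j : ℕ) ≤ 1 then 1 else if (j : ℕ) = 2 then 2 else 3)
  else (if (k : ℕ) ≤ (j : ℕ) then -1 else 0)

/-- Numerical nefness: nonnegative intersection with every numerical
exceptional class (for 7 generic points the effective cone is generated by
the exceptional curves, whose classes are the `E` with `E² = E·K = −1`). -/
def NumNef8 (D : Fin 8 → ℤ) : Prop :=
  ∀ E : Fin 8 → ℤ, inter8 E E = -1 ∧ inter8 E K8 = -1 → 0 ≤ inter8 D E

/-- The key arithmetic fact: solving `D² = −2 − D·K` for nonnegative
coefficient vectors. -/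
lemma key8 (a0 a1 a2 a3 a4 a5 a6 a7 : ℤ)
    (h0 : 0 ≤ a0) (h1 : 0 ≤ a1) (h2 : 0 ≤ a2) (h3 : 0 ≤ a3) (h4 : 0 ≤ a4)
    (h5 : 0 ≤ a5) (h6 : 0 ≤ a6) (h7 : 0 ≤ a7)
    (heq : a0*a0 + 2*a0*a1 + 4*a0*a2 + 6*a0*a3 + 6*a0*a4 + 6*a0*a5 + 6*a0*a6 + 6*a0*a7
      + 2*a1*a2 + 4*a1*a3 + 4*a1*a4 + 4*a1*a5 + 4*a1*a6 + 4*a1*a7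
      + 2*a2*a2 + 8*a2*a3 + 8*a2*a4 + 8*a2*a5 + 8*a2*a6 + 8*a2*a7
      + 6*a3*a3 + 12*a3*a4 + 12*a3*a5 + 12*a3*a6 + 12*a3*a7
      + 5*a4*a4 + 10*a4*a5 + 10*a4*a6 + 10*a4*a7
      + 4*a5*a5 + 8*a5*a6 + 8*a5*a7 + 3*a6*a6 + 6*a6*a7 + 2*a7*a7
      = -2 + (3*a0 + 2*a1 + 4*a2 + 6*a3 + 5*a4 + 4*a5 + 3*a6 + 2*a7)) :
    (a0 = 1 ∧ a2 = 0 ∧ a3 = 0 ∧ a4 = 0 ∧ a5 = 0 ∧ a6 = 0 ∧ a7 = 0) ∨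
    (a0 = 0 ∧ a2 = 1 ∧ a3 = 0 ∧ a4 = 0 ∧ a5 = 0 ∧ a6 = 0 ∧ a7 = 0) ∨
    (a0 = 2 ∧ a1 = 0 ∧ a2 = 0 ∧ a3 = 0 ∧ a4 = 0 ∧ a5 = 0 ∧ a6 = 0 ∧ a7 = 0) ∨
    (a0 = 0 ∧ a1 = 1 ∧ a2 = 0 ∧ a3 = 0 ∧ a4 = 0 ∧ a5 = 0 ∧ a6 = 0 ∧ a7 = 0) := by
  have ht0 : (0:ℤ) ≤ a0 + a1 + 2*a2 + 3*a3 + 3*a4 + 3*a5 + 3*a6 + 3*a7 := by linarith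
  have ht1 : (0:ℤ) ≤ a0 + a2 + 2*a3 + 2*a4 + 2*a5 + 2*a6 + 2*a7 := by linarith
  have ht2 : (0:ℤ) ≤ 2*a0 + a1 + 2*a2 + 4*a3 + 4*a4 + 4*a5 + 4*a6 + 4*a7 := by linarith
  have ht3 : (0:ℤ) ≤ 3*a0 + 2*a1 + 4*a2 + 6*a3 + 6*a4 + 6*a5 + 6*a6 + 6*a7 := by linarith
  have ht4 : (0:ℤ) ≤ 3*a0 + 2*a1 + 4*a2 + 6*a3 + 5*a4 + 5*a5 + 5*a6 + 5*a7 := by linarith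
  have ht5 : (0:ℤ) ≤ 3*a0 + 2*a1 + 4*a2 + 6*a3 + 5*a4 + 4*a5 + 4*a6 + 4*a7 := by linarith
  have ht6 : (0:ℤ) ≤ 3*a0 + 2*a1 + 4*a2 + 6*a3 + 5*a4 + 4*a5 + 3*a6 + 3*a7 := by linarith
  have ht7 : (0:ℤ) ≤ 3*a0 + 2*a1 + 4*a2 + 6*a3 + 5*a4 + 4*a5 + 3*a6 + 2*a7 := by linarith
  have p0 := mul_nonneg h0 ht0
  have p1 := mul_nonneg h1 ht1
  have p2 := mul_nonneg h2 ht2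
  have p3 := mul_nonneg h3 ht3
  have p4 := mul_nonneg h4 ht4
  have p5 := mul_nonneg h5 ht5
  have p6 := mul_nonneg h6 ht6
  have p7 := mul_nonneg h7 ht7
  have z3 : a3 = 0 := by
    by_contra hne
    have q := mul_nonneg (by omega : (0:ℤ) ≤ a3 - 1) ht3
    linarith [heq, p0, p1, p2, p4, p5, p6, p7, q]
  have z4 : a4 = 0 := by
    by_contra hne
    have q := mul_nonneg (by omega : (0:ℤ) ≤ a4 - 1) ht4
    linarith [heq, p0, p1, p2, p3, p5, p6, p7, q]
  have z5 : a5 = 0 := by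
    by_contra hne
    have q := mul_nonneg (by omega : (0:ℤ) ≤ a5 - 1) ht5
    linarith [heq, p0, p1, p2, p3, p4, p6, p7, q]
  have z6 : a6 = 0 := by
    by_contra hne
    have q := mul_nonneg (by omega : (0:ℤ) ≤ a6 - 1) ht6
    linarith [heq, p0, p1, p2, p3, p4, p5, p7, q]
  have z7 : a7 = 0 := by
    by_contra hne
    have q := mul_nonneg (by omega : (0:ℤ) ≤ a7 - 1) ht7
    linarith [heq, p0, p1, p2, p3, p4, p5, p6, q]
  subst z3 z4 z5 z6 z7
  rcases eq_or_lt_of_le h2 with hc2 | hc2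
  · have hf : (a0 - 1) * (a0 + 2*a1 - 2) = 0 := by
      linear_combination heq + (4*a0 + 2*a1 + 2*a2 - 4) * hc2
    rcases mul_eq_zero.mp hf with h | h
    · exact Or.inl ⟨by omega, by omega, rfl, rfl, rfl, rfl, rfl⟩
    · rcases (by omega : a0 = 2 ∧ a1 = 0 ∨ a0 = 0 ∧ a1 = 1) with ⟨e,f⟩ | ⟨e,f⟩
      · exact Or.inr (Or.inr (Or.inl ⟨e, f, by omega, rfl, rfl, rfl, rfl, rfl⟩))
      · exact Or.inr (Or.inr (Or.inr ⟨e, f, by omega, rfl, rfl, rfl, rfl, rfl⟩))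
  · have hz0 : a0 = 0 := by
      by_contra hne
      have u : (0:ℤ) ≤ a0 - 1 := by omega
      have v : (0:ℤ) ≤ a2 - 1 := by omega
      nlinarith [mul_nonneg u u, mul_nonneg u v, mul_nonneg v v, mul_nonneg u h1, mul_nonneg v h1]
    have hf : 2 * ((a2 - 1) * (a2 + a1 - 1)) = 0 := by
      linear_combination heq - (a0 + 2*a1 + 4*a2 - 3) * hz0
    have hf2 : (a2 - 1) * (a2 + a1 - 1) = 0 := by omega
    rcases mul_eq_zero.mp hf2 with h | h
    · exact Or.inr (Or.inl ⟨hz0, by omega, rfl, rfl, rfl, rfl, rfl⟩)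
    · exact Or.inr (Or.inl ⟨hz0, by omega, rfl, rfl, rfl, rfl, rfl⟩)

/-- a nef class `D` with `D² = −2 − D·K_X` which is a non-negative
integer combination of `H_0, …, H_7` is one of `H_0 + dH_1`, `H_2 + dH_1`
(`d ≥ 0`), `2H_0`, or `H_1`. -/
theorem seven_point_rational_nef_classes (D : Fin 8 → ℤ)
    (hcomb : ∃ c : Fin 8 → ℕ, D = ∑ j : Fin 8, (c j : ℤ) • H7 j)
    (hrat : inter8 D D = -2 - inter8 D K8)
    (hnef : NumNef8 D) :
    (∃ d : ℕ, D = H7 0 + (d : ℤ) • H7 1) ∨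
    (∃ d : ℕ, D = H7 2 + (d : ℤ) • H7 1) ∨
    D = (2 : ℤ) • H7 0 ∨ D = H7 1 := by
  obtain ⟨c, hc⟩ := hcomb
  have v2 : ((2 : Fin 8) : ℕ) = 2 := rfl
  have v3 : ((3 : Fin 8) : ℕ) = 3 := rfl
  have v4 : ((4 : Fin 8) : ℕ) = 4 := rfl
  have v5 : ((5 : Fin 8) : ℕ) = 5 := rfl
  have v6 : ((6 : Fin 8) : ℕ) = 6 := rfl
  have v7 : ((7 : Fin 8) : ℕ) = 7 := rfl
  have e0 : D 0 = (c 0 : ℤ) + c 1 + 2 * c 2 + 3 * (c 3 + c 4 + c 5 + c 6 + c 7) := by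
    rw [hc]; simp [Fin.sum_univ_eight, H7, v2, v3, v4, v5, v6, v7]; ring
  have e1 : D 1 = -((c 1 : ℤ) + c 2 + c 3 + c 4 + c 5 + c 6 + c 7) := by
    rw [hc]; simp [Fin.sum_univ_eight, H7, v2, v3, v4, v5, v6, v7]; ring
  have e2 : D 2 = -((c 2 : ℤ) + c 3 + c 4 + c 5 + c 6 + c 7) := by
    rw [hc]; simp [Fin.sum_univ_eight, H7, v2, v3, v4, v5, v6, v7]; ring
  have e3 : D 3 = -((c 3 : ℤ) + c 4 + c 5 + c 6 + c 7) := by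
    rw [hc]; simp [Fin.sum_univ_eight, H7, v2, v3, v4, v5, v6, v7]; ring
  have e4 : D 4 = -((c 4 : ℤ) + c 5 + c 6 + c 7) := by
    rw [hc]; simp [Fin.sum_univ_eight, H7, v2, v3, v4, v5, v6, v7]; ring
  have e5 : D 5 = -((c 5 : ℤ) + c 6 + c 7) := by
    rw [hc]; simp [Fin.sum_univ_eight, H7, v2, v3, v4, v5, v6, v7]; ring
  have e6 : D 6 = -((c 6 : ℤ) + c 7) := by
    rw [hc]; simp [Fin.sum_univ_eight, H7, v2, v3, v4, v5, v6, v7]; ring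
  have e7 : D 7 = -(c 7 : ℤ) := by
    rw [hc]; simp [Fin.sum_univ_eight, H7, v2, v3, v4, v5, v6, v7]
  have s1 : Fin.succ (0 : Fin 7) = (1 : Fin 8) := rfl
  have s2 : Fin.succ (1 : Fin 7) = (2 : Fin 8) := rfl
  have s3 : Fin.succ (2 : Fin 7) = (3 : Fin 8) := rfl
  have s4 : Fin.succ (3 : Fin 7) = (4 : Fin 8) := rfl
  have s5 : Fin.succ (4 : Fin 7) = (5 : Fin 8) := rfl
  have s6 : Fin.succ (5 : Fin 7) = (6 : Fin 8) := rfl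
  have s7 : Fin.succ (6 : Fin 7) = (7 : Fin 8) := rfl
  rw [inter8, inter8, Fin.sum_univ_seven, Fin.sum_univ_seven, s1, s2, s3, s4, s5, s6, s7,
    show K8 0 = -3 from rfl, show K8 1 = 1 from rfl, show K8 2 = 1 from rfl,
    show K8 3 = 1 from rfl, show K8 4 = 1 from rfl, show K8 5 = 1 from rfl,
    show K8 6 = 1 from rfl, show K8 7 = 1 from rfl,
    e0, e1, e2, e3, e4, e5, e6, e7] at hrat
  have h0 : (0:ℤ) ≤ (c 0 : ℤ) := Int.natCast_nonneg _
  have h1 : (0:ℤ) ≤ (c 1 : ℤ) := Int.natCast_nonneg _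
  have h2 : (0:ℤ) ≤ (c 2 : ℤ) := Int.natCast_nonneg _
  have h3 : (0:ℤ) ≤ (c 3 : ℤ) := Int.natCast_nonneg _
  have h4 : (0:ℤ) ≤ (c 4 : ℤ) := Int.natCast_nonneg _
  have h5 : (0:ℤ) ≤ (c 5 : ℤ) := Int.natCast_nonneg _
  have h6 : (0:ℤ) ≤ (c 6 : ℤ) := Int.natCast_nonneg _
  have h7 : (0:ℤ) ≤ (c 7 : ℤ) := Int.natCast_nonneg _
  have heq := key8 (c 0) (c 1) (c 2) (c 3) (c 4) (c 5) (c 6) (c 7)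
    h0 h1 h2 h3 h4 h5 h6 h7 (by linear_combination hrat)
  rcases heq with ⟨b0, b2, b3, b4, b5, b6, b7⟩ | ⟨b0, b2, b3, b4, b5, b6, b7⟩ |
    ⟨b0, b1, b2, b3, b4, b5, b6, b7⟩ | ⟨b0, b1, b2, b3, b4, b5, b6, b7⟩
  · -- D = H7 0 + (c 1) • H7 1
    left
    refine ⟨c 1, ?_⟩
    have n0 : c 0 = 1 := by exact_mod_cast b0
    have n2 : c 2 = 0 := by exact_mod_cast b2
    have n3 : c 3 = 0 := by exact_mod_cast b3
    have n4 : c 4 = 0 := by exact_mod_cast b4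
    have n5 : c 5 = 0 := by exact_mod_cast b5
    have n6 : c 6 = 0 := by exact_mod_cast b6
    have n7 : c 7 = 0 := by exact_mod_cast b7
    rw [hc, Fin.sum_univ_eight, n0, n2, n3, n4, n5, n6, n7]
    simp
  · -- D = H7 2 + (c 1) • H7 1
    right; left
    refine ⟨c 1, ?_⟩
    have n0 : c 0 = 0 := by exact_mod_cast b0
    have n2 : c 2 = 1 := by exact_mod_cast b2
    have n3 : c 3 = 0 := by exact_mod_cast b3
    have n4 : c 4 = 0 := by exact_mod_cast b4
    have n5 : c 5 = 0 := by exact_mod_cast b5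
    have n6 : c 6 = 0 := by exact_mod_cast b6
    have n7 : c 7 = 0 := by exact_mod_cast b7
    rw [hc, Fin.sum_univ_eight, n0, n2, n3, n4, n5, n6, n7]
    simp
    abel
  · -- D = 2 • H7 0
    right; right; left
    have n0 : c 0 = 2 := by exact_mod_cast b0
    have n1 : c 1 = 0 := by exact_mod_cast b1
    have n2 : c 2 = 0 := by exact_mod_cast b2
    have n3 : c 3 = 0 := by exact_mod_cast b3
    have n4 : c 4 = 0 := by exact_mod_cast b4
    have n5 : c 5 = 0 := by exact_mod_cast b5
    have n6 : c 6 = 0 := by exact_mod_cast b6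
    have n7 : c 7 = 0 := by exact_mod_cast b7
    rw [hc, Fin.sum_univ_eight, n0, n1, n2, n3, n4, n5, n6, n7]
    simp
  · -- D = H7 1
    right; right; right
    have n0 : c 0 = 0 := by exact_mod_cast b0
    have n1 : c 1 = 1 := by exact_mod_cast b1
    have n2 : c 2 = 0 := by exact_mod_cast b2
    have n3 : c 3 = 0 := by exact_mod_cast b3
    have n4 : c 4 = 0 := by exact_mod_cast b4
    have n5 : c 5 = 0 := by exact_mod_cast b5
    have n6 : c 6 = 0 := by exact_mod_cast b6
    have n7 : c 7 = 0 := by exact_mod_cast b7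
    rw [hc, Fin.sum_univ_eight, n0, n1, n2, n3, n4, n5, n6, n7]
    simp
end
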